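/- Let p be a prime. For any n ∈ F_p, (φ(p−1)/(p−1)) · Σ_{χ mod p} (μ(ord(χ))/φ(ord(χ))) · χ(n) equals 1 if n is a primitive root modulo p and 0 otherwise, where the sum is over all Dirichlet characters modulo p. -/

import Mathlib

open Finset ArithmeticFunction
open scoped ArithmeticFunction.Moebius ArithmeticFunction.zeta

private lemma sf_prod_primes (s : Finset ℕ) (hs : ∀ p ∈ s, p.Prime) :
    Squarefree (∏ p ∈ s, p) := by
  classical
  induction s using Finset.induction_on with
  | empty => simp
  | @insert a s ha ih =>
    rw [Finset.prod_insert ha, Nat.squarefree_mul_iff]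
    refine ⟨Nat.Coprime.prod_right fun p hp => ?_, (hs a (mem_insert_self a s)).squarefree,
      ih fun p hp => hs p (mem_insert_of_mem hp)⟩
    exact (Nat.coprime_primes (hs a (mem_insert_self a s))
      (hs p (mem_insert_of_mem hp))).mpr (fun h => ha (h ▸ hp))

private lemma totient_complex (n : ℕ) :
    (Nat.totient n : ℂ) = n * ∏ p ∈ n.primeFactors, (1 - (p : ℂ)⁻¹) := by
  have h := Nat.totient_eq_mul_prod_factors n
  have h2 : ((Nat.totient n : ℚ) : ℂ) = (((n : ℚ) * ∏ p ∈ n.primeFactors, (1 - (p : ℚ)⁻¹)) : ℂ) :=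
    by exact_mod_cast congrArg (fun x : ℚ => (x : ℂ)) h
  push_cast at h2
  exact_mod_cast h2

private lemma prod_one_sub_inv_ne_zero (s : Finset ℕ) (hs : ∀ p ∈ s, p.Prime) :
    ∏ p ∈ s, (1 - (p : ℂ)⁻¹) ≠ 0 := by
  rw [Finset.prod_ne_zero_iff]
  intro p hp
  rw [sub_ne_zero]
  intro h
  have : (p : ℂ) = 1 := inv_eq_one.mp h.symm
  exact (hs p hp).ne_one (by exact_mod_cast this)

open scoped Classical in
private lemma star {q e : ℕ} (hq : q ≠ 0) (he : e ∣ q) :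
    ∑ d ∈ q.divisors.filter (e ∣ ·), (μ d : ℂ) / d
      = (μ e : ℂ) * (Nat.totient q : ℂ) / ((q : ℂ) * (Nat.totient e : ℂ)) := by
  have he0 : e ≠ 0 := by rintro rfl; exact hq (Nat.eq_zero_of_zero_dvd he)
  set M := q / e with hMdef
  have hqM : q = e * M := (Nat.mul_div_cancel' he).symm
  have hM0 : M ≠ 0 := by rintro h; rw [h, mul_zero] at hqM; exact hq hqM
  -- reindex
  have hfilter : q.divisors.filter (e ∣ ·) =
      M.divisors.map ⟨(e * ·), mul_right_injective₀ he0⟩ := by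
    ext x
    simp only [mem_filter, Nat.mem_divisors, mem_map, Function.Embedding.coeFn_mk]
    constructor
    · rintro ⟨⟨hxq, -⟩, f, rfl⟩
      refine ⟨f, ⟨?_, hM0⟩, rfl⟩
      rw [hqM] at hxq
      exact (mul_dvd_mul_iff_left he0).mp hxq
    · rintro ⟨f, ⟨hf, -⟩, rfl⟩
      exact ⟨⟨hqM ▸ mul_dvd_mul_left e hf, hq⟩, dvd_mul_right e f⟩
  rw [hfilter, Finset.sum_map]
  simp only [Function.Embedding.coeFn_mk]
  by_cases hsf : Squarefree e
  · -- the multiplicative auxiliary function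
    set h : ℕ → ℂ := fun f => if e.Coprime f then (f : ℂ)⁻¹ else 0 with hh
    set H : ArithmeticFunction ℂ := ⟨h, by by_cases hc : e.Coprime 0 <;> simp [hh, hc]⟩ with hH
    have hHval : ∀ f : ℕ, H f = if e.Coprime f then (f : ℂ)⁻¹ else 0 := fun f => rfl
    have hHm : H.IsMultiplicative := by
      constructor
      · rw [hHval 1, if_pos (Nat.coprime_one_right e)]; norm_num
      · intro m n hmn
        rw [hHval, hHval, hHval]
        by_cases hm : e.Coprime m
        · by_cases hn : e.Coprime n
          · rw [if_pos hm, if_pos hn, if_pos (Nat.Coprime.mul_right hm hn)]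
            push_cast
            rw [mul_inv]
          · rw [if_neg hn, if_neg (fun hc => hn (Nat.coprime_mul_iff_right.mp hc).2), mul_zero]
        · rw [if_neg hm, if_neg (fun hc => hm (Nat.coprime_mul_iff_right.mp hc).1), zero_mul]
    have hterm : ∀ f ∈ M.divisors,
        (μ (e * f) : ℂ) / ((e * f : ℕ) : ℂ) = (μ e : ℂ) / e * ((μ f : ℂ) * H f) := by
      intro f hf
      have hf0 : f ≠ 0 := (Nat.pos_of_mem_divisors hf).ne'
      by_cases hc : e.Coprime f
      · rw [isMultiplicative_moebius.map_mul_of_coprime hc]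
        rw [hHval f, if_pos hc]
        push_cast
        rw [mul_div_mul_comm, div_eq_mul_inv ((μ f : ℤ) : ℂ)]
      · have h1 : μ (e * f) = 0 := by
          apply moebius_eq_zero_of_not_squarefree
          rw [Nat.squarefree_mul_iff]
          tauto
        have h2 : H f = 0 := by rw [hHval f, if_neg hc]
        simp [h1, h2]
    rw [Finset.sum_congr rfl hterm, ← Finset.mul_sum]
    -- replace divisors of M by divisors of its radical R
    set R : ℕ := ∏ p ∈ M.primeFactors, p with hRdef
    have hRsf : Squarefree R := sf_prod_primes _ fun p hp => Nat.prime_of_mem_primeFactors hp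
    have hR0 : R ≠ 0 := hRsf.ne_zero
    have hRpf : R.primeFactors = M.primeFactors :=
      Nat.primeFactors_prod fun p hp => Nat.prime_of_mem_primeFactors hp
    have hdiveq : M.divisors.filter Squarefree = R.divisors.filter Squarefree := by
      ext x
      simp only [mem_filter, Nat.mem_divisors]
      constructor
      · rintro ⟨⟨hxM, -⟩, hx⟩
        refine ⟨⟨?_, hR0⟩, hx⟩
        calc x = ∏ p ∈ x.primeFactors, p := (Nat.prod_primeFactors_of_squarefree hx).symm
        _ ∣ R := Finset.prod_dvd_prod_of_subset _ _ _ (Nat.primeFactors_mono hxM hM0)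
      · rintro ⟨⟨hxR, -⟩, hx⟩
        exact ⟨⟨hxR.trans (hRdef ▸ Nat.prod_primeFactors_dvd M), hM0⟩, hx⟩
    have hsum_eq : ∑ f ∈ M.divisors, (μ f : ℂ) * H f = ∑ f ∈ R.divisors, (μ f : ℂ) * H f := by
      rw [← Finset.sum_filter_add_sum_filter_not M.divisors Squarefree,
        ← Finset.sum_filter_add_sum_filter_not R.divisors Squarefree, hdiveq]
      congr 1
      rw [Finset.sum_eq_zero, Finset.sum_eq_zero]
      · intro x hx
        simp [moebius_eq_zero_of_not_squarefree (mem_filter.mp hx).2]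
      · intro x hx
        simp [moebius_eq_zero_of_not_squarefree (mem_filter.mp hx).2]
    rw [hsum_eq, ← ArithmeticFunction.IsMultiplicative.prodPrimeFactors_one_sub_of_squarefree H hHm hRsf,
      hRpf]
    -- now evaluate the product
    have hprod1 : ∏ p ∈ M.primeFactors, (1 - H p)
        = ∏ p ∈ M.primeFactors \ e.primeFactors, (1 - H p) := by
      refine (Finset.prod_subset (Finset.sdiff_subset) fun p hp hp' => ?_).symm
      have hpe : p ∣ e := by
        by_contra hpe
        exact hp' (Finset.mem_sdiff.mpr ⟨hp, fun hmem => hpe (Nat.dvd_of_mem_primeFactors hmem)⟩)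
      have hpp : p.Prime := Nat.prime_of_mem_primeFactors hp
      have : ¬ e.Coprime p := by
        intro hcop
        exact hpp.ne_one (Nat.Coprime.eq_one_of_dvd hcop.symm hpe)
      rw [hHval p, if_neg this]
      norm_num
    have hprod2 : ∏ p ∈ M.primeFactors \ e.primeFactors, (1 - H p)
        = ∏ p ∈ M.primeFactors \ e.primeFactors, (1 - (p : ℂ)⁻¹) := by
      refine Finset.prod_congr rfl fun p hp => ?_
      obtain ⟨hpM, hpe⟩ := Finset.mem_sdiff.mp hp
      have hpp : p.Prime := Nat.prime_of_mem_primeFactors hpM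
      have : e.Coprime p := Nat.Coprime.symm ((Nat.Prime.coprime_iff_not_dvd hpp).mpr
        fun hdvd => hpe (Nat.mem_primeFactors.mpr ⟨hpp, hdvd, he0⟩))
      rw [hHval p, if_pos this]
    have hsd : M.primeFactors \ e.primeFactors = q.primeFactors \ e.primeFactors := by
      rw [hqM, Nat.primeFactors_mul he0 hM0, Finset.union_sdiff_left]
    have hsub : e.primeFactors ⊆ q.primeFactors := Nat.primeFactors_mono he hq
    have hsplit := Finset.prod_sdiff (s₁ := e.primeFactors) (s₂ := q.primeFactors) (f := fun p => (1 - (p : ℂ)⁻¹)) hsub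
    have hPe : ∏ p ∈ e.primeFactors, (1 - (p : ℂ)⁻¹) ≠ 0 :=
      prod_one_sub_inv_ne_zero _ fun p hp => Nat.prime_of_mem_primeFactors hp
    rw [hprod1, hprod2, hsd]
    have hprodq : ∏ p ∈ q.primeFactors \ e.primeFactors, (1 - (p : ℂ)⁻¹)
        = (∏ p ∈ q.primeFactors, (1 - (p : ℂ)⁻¹)) / ∏ p ∈ e.primeFactors, (1 - (p : ℂ)⁻¹) := by
      rw [eq_div_iff hPe]; exact hsplit
    rw [hprodq, totient_complex q, totient_complex e]
    have hqC : (q : ℂ) ≠ 0 := Nat.cast_ne_zero.mpr hq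
    have heC : (e : ℂ) ≠ 0 := Nat.cast_ne_zero.mpr he0
    rw [div_mul_div_comm,
      div_eq_div_iff (mul_ne_zero heC hPe) (mul_ne_zero hqC (mul_ne_zero heC hPe))]
    ring
  · rw [Finset.sum_eq_zero, moebius_eq_zero_of_not_squarefree hsf]
    · simp
    · intro f hf
      have : ¬ Squarefree (e * f) := fun hc => hsf (hc.squarefree_of_dvd (dvd_mul_right e f))
      simp [moebius_eq_zero_of_not_squarefree this]
private lemma card_torsion_cyclic {G : Type*} [Group G] [Fintype G] [IsCyclic G] [DecidableEq G]
    {d : ℕ} (hd0 : d ≠ 0) (hd : d ∣ Fintype.card G) :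
    (Finset.univ.filter fun x : G => x ^ d = 1).card = d := by
  rw [← sum_card_orderOf_eq_card_pow_eq_one hd0,
    Finset.sum_congr rfl fun m hm => IsCyclic.card_orderOf_eq_totient
      ((Nat.dvd_of_mem_divisors hm).trans hd)]
  exact Nat.sum_totient d

private lemma hasEnough (X : Type*) [CommGroup X] [Finite X] :
    HasEnoughRootsOfUnity ℂ (Monoid.exponent X) := by
  have : Fintype X := Fintype.ofFinite X
  have hpos : 0 < Monoid.exponent X :=
    Monoid.exponent_pos_of_exists (Fintype.card X) Fintype.card_pos fun g => pow_card_eq_one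
  haveI : NeZero ((Monoid.exponent X : ℕ) : ℂ) := ⟨Nat.cast_ne_zero.mpr hpos.ne'⟩
  infer_instance

section Main

variable (p : ℕ) [Fact p.Prime]

open scoped Classical in
private lemma ortho {q d : ℕ} (hq : q = p - 1) (hd : d ∣ q) (hd0 : d ≠ 0)
    (u : (ZMod p)ˣ) :
    ∑ χ : DirichletCharacter ℂ p, (if χ ^ d = 1 then χ (u : ZMod p) else 0)
      = if u ^ (q / d) = 1 then (d : ℂ) else 0 := by
  haveI : NeZero p := ⟨(Fact.out : p.Prime).ne_zero⟩
  haveI := hasEnough (ZMod p)ˣ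
  have hq0 : q ≠ 0 := by
    have := (Fact.out : p.Prime).two_le; omega
  have hcardu : Fintype.card (ZMod p)ˣ = q := by
    rw [ZMod.card_units_eq_totient, Nat.totient_prime Fact.out, hq]
  haveI : IsCyclic (DirichletCharacter ℂ p) := by
    obtain ⟨E⟩ := DirichletCharacter.mulEquiv_units ℂ p
    exact isCyclic_of_surjective E.symm.toMonoidHom E.symm.surjective
  have hcardDC : Fintype.card (DirichletCharacter ℂ p) = q := by
    rw [← Nat.card_eq_fintype_card, DirichletCharacter.card_eq_totient_of_hasEnoughRootsOfUnity,
      Nat.totient_prime Fact.out, hq]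
  by_cases hP : u ^ (q / d) = 1
  · rw [if_pos hP]
    have key : ∀ χ : DirichletCharacter ℂ p, χ ^ d = 1 → χ (u : ZMod p) = 1 := by
      obtain ⟨g, hg⟩ := IsCyclic.exists_generator (α := (ZMod p)ˣ)
      have hog : orderOf g = q := by
        rw [orderOf_eq_card_of_forall_mem_zpowers hg, Nat.card_eq_fintype_card, hcardu]
      obtain ⟨a, ha⟩ := (Submonoid.mem_powers_iff u g).mp (mem_powers_iff_mem_zpowers.mpr (hg u))
      have hpow : g ^ (a * (q / d)) = 1 := by rw [pow_mul, ha]; exact hP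
      have hqd : q ∣ a * (q / d) := by
        have h' := orderOf_dvd_of_pow_eq_one hpow
        rwa [hog] at h'
      have hda : d ∣ a := by
        have h1 : d * (q / d) ∣ a * (q / d) := by rw [Nat.mul_div_cancel' hd]; exact hqd
        have hqd0 : 0 < q / d :=
          Nat.div_pos (Nat.le_of_dvd (Nat.pos_of_ne_zero hq0) hd) (Nat.pos_of_ne_zero hd0)
        exact (Nat.mul_dvd_mul_iff_right hqd0).mp h1
      obtain ⟨b, rfl⟩ := hda
      intro χ hχ
      rw [← ha, Units.val_pow_eq_pow_val, map_pow, pow_mul, ← MulChar.pow_apply_coe, hχ,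
        MulChar.one_apply_coe, one_pow]
    calc ∑ χ : DirichletCharacter ℂ p, (if χ ^ d = 1 then χ (u : ZMod p) else 0)
        = ∑ χ : DirichletCharacter ℂ p, (if χ ^ d = 1 then (1 : ℂ) else 0) := by
          refine Finset.sum_congr rfl fun χ _ => ?_
          by_cases hχ : χ ^ d = 1
          · rw [if_pos hχ, if_pos hχ, key χ hχ]
          · rw [if_neg hχ, if_neg hχ]
      _ = ((Finset.univ.filter fun χ : DirichletCharacter ℂ p => χ ^ d = 1).card : ℂ) := by
          rw [Finset.sum_boole]
      _ = (d : ℂ) := by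
          norm_cast
          convert card_torsion_cyclic hd0 (hcardDC ▸ hd) using 2
  · rw [if_neg hP]
    set K : Subgroup (ZMod p)ˣ := (powMonoidHom d : (ZMod p)ˣ →* (ZMod p)ˣ).range with hK
    have huK : (QuotientGroup.mk u : (ZMod p)ˣ ⧸ K) ≠ 1 := by
      rw [Ne, QuotientGroup.eq_one_iff]
      rintro ⟨y, rfl⟩
      apply hP
      show ((powMonoidHom d) y) ^ (q / d) = 1
      rw [powMonoidHom_apply, ← pow_mul, Nat.mul_div_cancel' hd, ← hcardu]
      exact pow_card_eq_one
    haveI := hasEnough ((ZMod p)ˣ ⧸ K)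
    obtain ⟨φ, hφ⟩ := CommGroup.exists_apply_ne_one_of_hasEnoughRootsOfUnity
      ((ZMod p)ˣ ⧸ K) ℂ huK
    set ψ : (ZMod p)ˣ →* ℂˣ := φ.comp (QuotientGroup.mk' K) with hψ
    set χ0 : DirichletCharacter ℂ p := MulChar.ofUnitHom ψ with hχ0
    have hχ0d : χ0 ^ d = 1 := by
      apply MulChar.ext
      intro a
      rw [MulChar.pow_apply_coe, hχ0, MulChar.ofUnitHom_coe, MulChar.one_apply_coe]
      have h1 : ψ a ^ d = 1 := by
        rw [hψ, MonoidHom.comp_apply, ← map_pow φ, ← map_pow (QuotientGroup.mk' K),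
          show (QuotientGroup.mk' K) (a ^ d) = 1 from (QuotientGroup.eq_one_iff _).mpr ⟨a, rfl⟩,
          map_one]
      rw [← Units.val_pow_eq_pow_val, h1, Units.val_one]
    have hχ0u : χ0 (u : ZMod p) ≠ 1 := by
      rw [hχ0, MulChar.ofUnitHom_coe]
      intro h
      exact hφ (Units.val_eq_one.mp h)
    have key : χ0 (u : ZMod p) * (∑ χ : DirichletCharacter ℂ p, if χ ^ d = 1 then χ (u : ZMod p) else 0)
        = ∑ χ : DirichletCharacter ℂ p, (if χ ^ d = 1 then χ (u : ZMod p) else 0) := by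
      rw [Finset.mul_sum]
      have hstep : ∀ χ : DirichletCharacter ℂ p,
          χ0 (u : ZMod p) * (if χ ^ d = 1 then χ (u : ZMod p) else 0)
            = (if (χ0 * χ) ^ d = 1 then (χ0 * χ) (u : ZMod p) else 0) := by
        intro χ
        have hcond : ((χ0 * χ) ^ d = 1) ↔ (χ ^ d = 1) := by
          rw [mul_pow, hχ0d, one_mul]
        by_cases hχ : χ ^ d = 1
        · rw [if_pos hχ, if_pos (hcond.mpr hχ), MulChar.mul_apply]
        · rw [if_neg hχ, if_neg (fun hc => hχ (hcond.mp hc)), mul_zero]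
      rw [Finset.sum_congr rfl fun χ _ => hstep χ]
      exact Fintype.sum_bijective (χ0 * ·) (Group.mulLeft_bijective χ0) _ _ (fun χ => rfl)
    have h2 : (χ0 (u : ZMod p) - 1)
        * (∑ χ : DirichletCharacter ℂ p, if χ ^ d = 1 then χ (u : ZMod p) else 0) = 0 := by
      rw [sub_mul, one_mul, key, sub_self]
    exact (mul_eq_zero.mp h2).resolve_left (sub_ne_zero.mpr hχ0u)

end Main
section Main2

variable (p : ℕ) [Fact p.Prime]

open scoped Classical in
private lemma moebius_sum_complex (N : ℕ) :
    ∑ d ∈ N.divisors, (μ d : ℂ) = if N = 1 then 1 else 0 := by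
  have h1 : ((μ * (ζ : ArithmeticFunction ℤ)) N : ℤ) = ∑ d ∈ N.divisors, μ d :=
    coe_mul_zeta_apply
  rw [moebius_mul_coe_zeta, ArithmeticFunction.one_apply] at h1
  calc ∑ d ∈ N.divisors, (μ d : ℂ) = ((∑ d ∈ N.divisors, μ d : ℤ) : ℂ) := by push_cast; rfl
    _ = (((if N = 1 then 1 else 0) : ℤ) : ℂ) := by rw [← h1]
    _ = if N = 1 then 1 else 0 := by split_ifs <;> simp

open scoped Classical in
private lemma weighted_sum {q : ℕ} (hq : q = p - 1) (u : (ZMod p)ˣ) :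
    ∑ χ : DirichletCharacter ℂ p,
        ((μ (orderOf χ) : ℂ) / (Nat.totient (orderOf χ) : ℂ)) * χ (u : ZMod p)
      = ((q : ℂ) / (Nat.totient q : ℂ)) * (if orderOf u = q then 1 else 0) := by
  haveI : NeZero p := ⟨(Fact.out : p.Prime).ne_zero⟩
  haveI := hasEnough (ZMod p)ˣ
  have hq0 : q ≠ 0 := by have := (Fact.out : p.Prime).two_le; omega
  have hcardu : Fintype.card (ZMod p)ˣ = q := by
    rw [ZMod.card_units_eq_totient, Nat.totient_prime Fact.out, hq]
  have hcardDC : Fintype.card (DirichletCharacter ℂ p) = q := by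
    rw [← Nat.card_eq_fintype_card, DirichletCharacter.card_eq_totient_of_hasEnoughRootsOfUnity,
      Nat.totient_prime Fact.out, hq]
  have hφq : (Nat.totient q : ℂ) ≠ 0 :=
    Nat.cast_ne_zero.mpr (Nat.totient_pos.mpr (Nat.pos_of_ne_zero hq0)).ne'
  have hqC : (q : ℂ) ≠ 0 := Nat.cast_ne_zero.mpr hq0
  -- the order of u
  set m := orderOf u with hm
  have hmq : m ∣ q := by rw [hm, ← hcardu]; exact orderOf_dvd_card
  have hm0 : m ≠ 0 := (orderOf_pos u).ne'
  -- coefficient identity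
  have hcoef : ∀ χ : DirichletCharacter ℂ p,
      (μ (orderOf χ) : ℂ) / (Nat.totient (orderOf χ) : ℂ)
        = ((q : ℂ) / (Nat.totient q : ℂ))
            * ∑ d ∈ q.divisors.filter (orderOf χ ∣ ·), (μ d : ℂ) / d := by
    intro χ
    have he : orderOf χ ∣ q := hcardDC ▸ orderOf_dvd_card
    have he0 : orderOf χ ≠ 0 := (orderOf_pos χ).ne'
    have hφe : (Nat.totient (orderOf χ) : ℂ) ≠ 0 :=
      Nat.cast_ne_zero.mpr (Nat.totient_pos.mpr (Nat.pos_of_ne_zero he0)).ne'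
    rw [star hq0 he]
    field_simp
  calc ∑ χ : DirichletCharacter ℂ p,
        ((μ (orderOf χ) : ℂ) / (Nat.totient (orderOf χ) : ℂ)) * χ (u : ZMod p)
      = ((q : ℂ) / (Nat.totient q : ℂ)) * ∑ χ : DirichletCharacter ℂ p,
          ∑ d ∈ q.divisors, (if orderOf χ ∣ d then (μ d : ℂ) / d * χ (u : ZMod p) else 0) := by
        rw [Finset.mul_sum]
        refine Finset.sum_congr rfl fun χ _ => ?_
        rw [hcoef χ, mul_assoc, Finset.sum_mul, ← Finset.sum_filter]
    _ = ((q : ℂ) / (Nat.totient q : ℂ)) * ∑ d ∈ q.divisors,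
          ∑ χ : DirichletCharacter ℂ p, (if χ ^ d = 1 then (μ d : ℂ) / d * χ (u : ZMod p) else 0) := by
        rw [Finset.sum_comm]
        congr 1
        refine Finset.sum_congr rfl fun d _ => Finset.sum_congr rfl fun χ _ => ?_
        exact if_congr orderOf_dvd_iff_pow_eq_one rfl rfl
    _ = ((q : ℂ) / (Nat.totient q : ℂ)) * ∑ d ∈ q.divisors,
          (if m ∣ q / d then (μ d : ℂ) else 0) := by
        congr 1
        refine Finset.sum_congr rfl fun d hd => ?_
        have hdq : d ∣ q := Nat.dvd_of_mem_divisors hd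
        have hd0 : d ≠ 0 := (Nat.pos_of_mem_divisors hd).ne'
        have : ∑ χ : DirichletCharacter ℂ p, (if χ ^ d = 1 then (μ d : ℂ) / d * χ (u : ZMod p) else 0)
            = (μ d : ℂ) / d * ∑ χ : DirichletCharacter ℂ p, (if χ ^ d = 1 then χ (u : ZMod p) else 0) := by
          rw [Finset.mul_sum]
          exact Finset.sum_congr rfl fun χ _ => by rw [mul_ite, mul_zero]
        rw [this, ortho p hq hdq hd0 u]
        have hdvd_iff : (u ^ (q / d) = 1) ↔ (m ∣ q / d) := orderOf_dvd_iff_pow_eq_one.symm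
        by_cases hcase : m ∣ q / d
        · rw [if_pos (hdvd_iff.mpr hcase), if_pos hcase, div_mul_cancel₀]
          exact Nat.cast_ne_zero.mpr hd0
        · rw [if_neg (fun hh => hcase (hdvd_iff.mp hh)), if_neg hcase, mul_zero]
    _ = ((q : ℂ) / (Nat.totient q : ℂ)) * (if m = q then 1 else 0) := by
        congr 1
        have hset : q.divisors.filter (fun d => m ∣ q / d) = (q / m).divisors := by
          ext d
          simp only [Finset.mem_filter, Nat.mem_divisors]
          constructor
          · rintro ⟨⟨hdq, -⟩, hmd⟩
            have hdm : d ∣ q / m := by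
              rw [Nat.dvd_div_iff_mul_dvd hmq, mul_comm]
              calc d * m ∣ d * (q / d) := mul_dvd_mul_left d hmd
                _ = q := Nat.mul_div_cancel' hdq
            have hqm0 : q / m ≠ 0 := by
              intro hc
              have hcc := Nat.mul_div_cancel' hmq
              rw [hc, mul_zero] at hcc
              exact hq0 hcc.symm
            exact ⟨hdm, hqm0⟩
          · rintro ⟨hd, -⟩
            have hdmq : m * d ∣ q := by rwa [Nat.dvd_div_iff_mul_dvd hmq] at hd
            have hdq : d ∣ q := (dvd_mul_left d m).trans hdmq
            refine ⟨⟨hdq, hq0⟩, ?_⟩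
            rw [Nat.dvd_div_iff_mul_dvd hdq, mul_comm]
            exact hdmq
        rw [← Finset.sum_filter, hset, moebius_sum_complex]
        have hiff : (q / m = 1) ↔ (m = q) := by
          constructor
          · intro h
            have := Nat.mul_div_cancel' hmq
            rw [h, mul_one] at this
            exact this
          · rintro rfl
            exact Nat.div_self (Nat.pos_of_ne_zero hm0)
        by_cases hcase : m = q
        · rw [if_pos (hiff.mpr hcase), if_pos hcase]
        · rw [if_neg (fun hh => hcase (hiff.mp hh)), if_neg hcase]

end Main2

open scoped Classical in
/-- For `p` prime and any `n ∈ F_p`, the weighted character sum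
`(φ(p−1)/(p−1)) Σ_χ (μ(ord χ)/φ(ord χ)) χ(n)` is `1` if `n` is a primitive root mod `p`
and `0` otherwise. -/
theorem stmt_6 (p : ℕ) [Fact p.Prime] (n : ZMod p) :
    ((Nat.totient (p - 1) : ℂ) / ((p : ℂ) - 1)) *
      ∑ χ : DirichletCharacter ℂ p,
        ((ArithmeticFunction.moebius (orderOf χ) : ℂ) / (Nat.totient (orderOf χ) : ℂ)) * χ n
    = if IsPrimitiveRoot n (p - 1) then 1 else 0 := by
  haveI : NeZero p := ⟨(Fact.out : p.Prime).ne_zero⟩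
  have hp2 : 2 ≤ p := (Fact.out : p.Prime).two_le
  have hq0 : p - 1 ≠ 0 := by omega
  have hpq : ((p : ℂ) - 1) = ((p - 1 : ℕ) : ℂ) := by
    have : (1 : ℕ) ≤ p := by omega
    push_cast [Nat.cast_sub this]
    ring
  have hφq : (Nat.totient (p - 1) : ℂ) ≠ 0 :=
    Nat.cast_ne_zero.mpr (Nat.totient_pos.mpr (Nat.pos_of_ne_zero hq0)).ne'
  have hqC : ((p - 1 : ℕ) : ℂ) ≠ 0 := Nat.cast_ne_zero.mpr hq0
  by_cases hu : IsUnit n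
  · obtain ⟨u, rfl⟩ := hu
    rw [hpq, weighted_sum p rfl u]
    have hiff : IsPrimitiveRoot (↑u : ZMod p) (p - 1) ↔ orderOf u = p - 1 := by
      constructor
      · intro h
        rw [IsPrimitiveRoot.coe_units_iff] at h
        exact (h.eq_orderOf).symm
      · intro h
        rw [IsPrimitiveRoot.coe_units_iff, ← h]
        exact IsPrimitiveRoot.orderOf u
    by_cases hcase : orderOf u = p - 1
    · rw [if_pos hcase, if_pos (hiff.mpr hcase), mul_one, div_mul_div_comm,
        mul_comm ((Nat.totient (p - 1) : ℂ)) (((p - 1 : ℕ) : ℂ))]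
      exact div_self (mul_ne_zero hqC hφq)
    · rw [if_neg hcase, if_neg (fun hh => hcase (hiff.mp hh)), mul_zero, mul_zero]
  · have h0 : ∀ χ : DirichletCharacter ℂ p, χ n = 0 := fun χ => MulChar.map_nonunit χ hu
    rw [if_neg (fun h : IsPrimitiveRoot n (p - 1) =>
      hu (IsUnit.of_pow_eq_one h.pow_eq_one hq0))]
    rw [Finset.sum_congr rfl fun χ _ => by rw [h0 χ, mul_zero]]
    simp
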